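/- The number of northeastern lattice paths of length n starting at (0,0) that stay weakly below the diagonal y = x (with arbitrary endpoint at level n) equals binomial(n, floor(n/2)). -/

import Mathlib

def S (n k : ℕ) : ℕ := ∑ i ∈ Finset.range (k + 1), n.choose ((n - k) / 2 + i)

lemma sum_range_choose_full (n m : ℕ) (h : n + 1 ≤ m) :
    ∑ i ∈ Finset.range m, n.choose i = 2 ^ n := by
  rw [← Nat.sum_range_choose n]
  exact (Finset.sum_subset (Finset.range_subset_range.mpr h)
    (fun x _ hx => Nat.choose_eq_zero_of_lt (by simpa using hx))).symm

lemma S_id1 (n : ℕ) : S (n + 1) 0 = S n 1 := by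
  match n with
  | 0 => decide
  | m + 1 =>
    have h1 : (m + 2 - 0) / 2 = m / 2 + 1 := by omega
    have h2 : (m + 1 - 1) / 2 = m / 2 := by omega
    simp only [S, h1, h2, Finset.sum_range_succ, Finset.sum_range_one]
    rw [Nat.choose_succ_succ]
    have : (m / 2).succ = 1 + m / 2 := by omega
    rw [this]
    simp only [Finset.sum_range_zero, Nat.zero_add, Nat.add_zero, zero_add, add_zero]
    rw [Nat.add_comm 1 (m/2)]

lemma S_id2 (n k : ℕ) : S (n + 1) (k + 1) = S n (k + 2) + S n k := by
  rcases le_or_gt n k with hk | hk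
  · -- k ≥ n : all sums are full
    have e1 : (n + 1 - (k+1)) / 2 = 0 := by omega
    have e2 : (n - k) / 2 = 0 := by omega
    have e3 : (n - (k+2)) / 2 = 0 := by omega
    simp only [S, e1, e2, e3, Nat.zero_add]
    rw [sum_range_choose_full (n+1) (k+2) (by omega),
        sum_range_choose_full n (k+3) (by omega),
        sum_range_choose_full n (k+1) (by omega)]
    ring
  rcases eq_or_lt_of_le (Nat.succ_le_of_lt hk) with hk1 | hk2
  · -- n = k + 1
    have hn : n = k + 1 := by omega
    clear hk1 hk
    subst hn
    have e1 : (k + 1 + 1 - (k+1)) / 2 = 0 := by omega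
    have e2 : (k + 1 - k) / 2 = 0 := by omega
    have e3 : (k + 1 - (k+2)) / 2 = 0 := by omega
    simp only [S, e1, e2, e3, Nat.zero_add]
    have f1 : ∑ i ∈ Finset.range (k+3), (k+2).choose i = 2 ^ (k+2) :=
      sum_range_choose_full _ _ (by omega)
    have f2 : ∑ i ∈ Finset.range (k+2), (k+1).choose i = 2 ^ (k+1) :=
      sum_range_choose_full _ _ (by omega)
    have f3 : ∑ i ∈ Finset.range (k+3), (k+1).choose i = 2 ^ (k+1) :=
      sum_range_choose_full _ _ (by omega)
    have g1 : ∑ i ∈ Finset.range (k+3), (k+2).choose i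
        = ∑ i ∈ Finset.range (k+2), (k+2).choose i + (k+2).choose (k+2) :=
      Finset.sum_range_succ _ _
    have g2 : ∑ i ∈ Finset.range (k+2), (k+1).choose i
        = ∑ i ∈ Finset.range (k+1), (k+1).choose i + (k+1).choose (k+1) :=
      Finset.sum_range_succ _ _
    rw [Nat.choose_self] at g1 g2
    have p1 : (0:ℕ) < 2 ^ (k+1) := by positivity
    rw [f3]
    show ∑ i ∈ Finset.range (k+2), (k+2).choose i
        = 2^(k+1) + ∑ i ∈ Finset.range (k+1), (k+1).choose i
    have hb : (∑ i ∈ Finset.range (k+2), (k+2).choose i) + 1 = 2^(k+2) := by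
      rw [← g1]; exact f1
    have hs : (∑ i ∈ Finset.range (k+1), (k+1).choose i) + 1 = 2^(k+1) := by
      rw [← g2]; exact f2
    have hp : (2:ℕ)^(k+2) = 2 * 2^(k+1) := by ring
    omega
  · -- k + 2 ≤ n
    obtain ⟨b, hb⟩ : ∃ b, (n - (k+2)) / 2 = b := ⟨_, rfl⟩
    have e1 : (n + 1 - (k+1)) / 2 = b + 1 := by omega
    have e2 : (n - k) / 2 = b + 1 := by omega
    simp only [S, e1, e2, hb]
    have pascal : ∀ i, (n+1).choose (b + 1 + i) = n.choose (b + i) + n.choose (b + i + 1) := by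
      intro i
      have : b + 1 + i = (b + i) + 1 := by omega
      rw [this, Nat.choose_succ_succ]
    calc ∑ i ∈ Finset.range (k+2), (n+1).choose (b+1+i)
        = ∑ i ∈ Finset.range (k+2), (n.choose (b+i) + n.choose (b+i+1)) := by
          exact Finset.sum_congr rfl (fun i _ => pascal i)
      _ = ∑ i ∈ Finset.range (k+2), n.choose (b+i)
            + ∑ i ∈ Finset.range (k+2), n.choose (b+i+1) := Finset.sum_add_distrib
      _ = ∑ i ∈ Finset.range (k+3), n.choose (b+i) + ∑ i ∈ Finset.range (k+1), n.choose (b+1+i) := by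
          have h2 : ∀ i ∈ Finset.range (k+2), n.choose (b + i + 1) = n.choose (b + 1 + i) :=
            fun i _ => by congr 1; omega
          rw [Finset.sum_congr rfl h2,
              Finset.sum_range_succ (fun i => n.choose (b+i)) (k+2),
              Finset.sum_range_succ (fun i => n.choose (b+1+i)) (k+1)]
          have h1 : n.choose (b + (k+2)) = n.choose (b + 1 + (k+1)) := by congr 1; omega
          rw [h1]; ring

def A (n : ℕ) (x : ℕ × ℕ) : Type :=
  {p : Fin (n + 1) → ℕ × ℕ //
      p 0 = x ∧
      (∀ i : Fin n, p i.succ = p i.castSucc + (1, 0) ∨ p i.succ = p i.castSucc + (0, 1)) ∧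
      (∀ j, (p j).2 ≤ (p j).1)}

lemma A_isEmpty {n a b : ℕ} (h : a < b) : IsEmpty (A n (a, b)) :=
  ⟨fun p => by
    have h1 := p.2.2.2 0
    rw [p.2.1] at h1
    simp only [Prod.fst, Prod.snd] at h1
    omega⟩

lemma step_tail {n : ℕ} {x : ℕ × ℕ} (p : A (n + 1) x) (i : Fin n) :
    p.1 i.succ.succ = p.1 i.castSucc.succ + (1, 0) ∨
      p.1 i.succ.succ = p.1 i.castSucc.succ + (0, 1) := by
  have h := p.2.2.1 i.succ
  rwa [← Fin.succ_castSucc] at h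

lemma cons_step {n a b : ℕ} {x' : ℕ × ℕ} (q : A n x')
    (hstep : x' = (a, b) + (1, 0) ∨ x' = (a, b) + (0, 1)) :
    ∀ i : Fin (n + 1),
      (Fin.cons (a, b) q.1 : Fin (n + 2) → ℕ × ℕ) i.succ
          = (Fin.cons (a, b) q.1 : Fin (n + 2) → ℕ × ℕ) i.castSucc + (1, 0) ∨
        (Fin.cons (a, b) q.1 : Fin (n + 2) → ℕ × ℕ) i.succ
          = (Fin.cons (a, b) q.1 : Fin (n + 2) → ℕ × ℕ) i.castSucc + (0, 1) := by
  refine Fin.cases ?_ ?_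
  · simpa [q.2.1] using hstep
  · intro j
    rw [← Fin.succ_castSucc]
    simpa using q.2.2.1 j

lemma cons_diag {n a b : ℕ} {x' : ℕ × ℕ} (q : A n x') (hba : b ≤ a) :
    ∀ j : Fin (n + 2),
      ((Fin.cons (a, b) q.1 : Fin (n + 2) → ℕ × ℕ) j).2
        ≤ ((Fin.cons (a, b) q.1 : Fin (n + 2) → ℕ × ℕ) j).1 := by
  refine Fin.cases ?_ ?_
  · simpa using hba
  · intro j; simpa using q.2.2.2 j

def A_equiv (n a b : ℕ) (hba : b ≤ a) :
    A (n + 1) (a, b) ≃ (A n (a + 1, b)) ⊕ (A n (a, b + 1)) where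
  toFun p :=
    if h1 : p.1 ((0 : Fin (n + 1)).succ) = (a + 1, b) then
      Sum.inl ⟨fun j => p.1 j.succ, h1, fun i => step_tail p i, fun j => p.2.2.2 j.succ⟩
    else
      Sum.inr ⟨fun j => p.1 j.succ, by
        have h0 := p.2.2.1 0
        rw [Fin.castSucc_zero, p.2.1] at h0
        show p.1 ((0 : Fin (n + 1)).succ) = (a, b + 1)
        rcases h0 with h0 | h0
        · exact absurd (by rw [h0]; simp) h1
        · rw [h0]; simp,
        fun i => step_tail p i, fun j => p.2.2.2 j.succ⟩
  invFun := fun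
    | Sum.inl q => ⟨Fin.cons (a, b) q.1, Fin.cons_zero _ _,
        cons_step q (Or.inl (by simp)), cons_diag q hba⟩
    | Sum.inr q => ⟨Fin.cons (a, b) q.1, Fin.cons_zero _ _,
        cons_step q (Or.inr (by simp)), cons_diag q hba⟩
  left_inv p := by
    by_cases h1 : p.1 ((0 : Fin (n + 1)).succ) = (a + 1, b)
    · simp only [dif_pos h1]
      apply Subtype.ext
      funext j
      refine Fin.cases ?_ ?_ j
      · simp [p.2.1]
      · intro i; simp
    · simp only [dif_neg h1]
      apply Subtype.ext
      funext j
      refine Fin.cases ?_ ?_ j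
      · simp [p.2.1]
      · intro i; simp
  right_inv q := by
    rcases q with q | q
    · have hc : (Fin.cons (a, b) q.1 : Fin (n + 2) → ℕ × ℕ) ((0 : Fin (n + 1)).succ)
          = (a + 1, b) := by
        rw [Fin.cons_succ]; rw [q.2.1]
      simp only [dif_pos hc]
      congr 1
      all_goals (apply Subtype.ext; funext j; simp)
    · have hc : ¬ ((Fin.cons (a, b) q.1 : Fin (n + 2) → ℕ × ℕ) ((0 : Fin (n + 1)).succ)
          = (a + 1, b)) := by
        rw [Fin.cons_succ, q.2.1]
        simp [Prod.ext_iff]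
      simp only [dif_neg hc]
      congr 1
      all_goals (apply Subtype.ext; funext j; simp)

lemma A_subsingleton_zero (x : ℕ × ℕ) : Subsingleton (A 0 x) :=
  ⟨fun p q => Subtype.ext (funext fun j => by
    have hj : j = 0 := Fin.ext (by simp [Nat.lt_one_iff.mp j.isLt])
    rw [hj, p.2.1, q.2.1])⟩

lemma A_finite : ∀ (n : ℕ) (x : ℕ × ℕ), Finite (A n x) := by
  intro n
  induction n with
  | zero =>
    intro x
    have := A_subsingleton_zero x
    exact Finite.of_subsingleton
  | succ n ih =>
    rintro ⟨a, b⟩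
    rcases le_or_gt b a with h | h
    · have f1 := ih (a + 1, b)
      have f2 := ih (a, b + 1)
      exact Finite.of_equiv _ (A_equiv n a b h).symm
    · have := A_isEmpty (n := n + 1) h
      exact Finite.of_subsingleton

def A_zero_equiv (x : ℕ × ℕ) (h : x.2 ≤ x.1) : A 0 x ≃ Unit where
  toFun _ := ()
  invFun _ := ⟨fun _ => x, rfl, fun i => i.elim0, fun _ => h⟩
  left_inv p := Subtype.ext (funext fun j => by
    have hj : j = 0 := Fin.ext (by simp [Nat.lt_one_iff.mp j.isLt])
    rw [hj, p.2.1])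
  right_inv _ := rfl

lemma S_zero' (k : ℕ) : S 0 k = 1 := by
  induction k with
  | zero => simp [S]
  | succ k ih =>
    have h : S 0 (k+1) = S 0 k + Nat.choose 0 (k+1) := by
      simp [S, Finset.sum_range_succ]
    rw [h, ih, Nat.choose_eq_zero_of_lt (by omega)]

lemma card_A : ∀ (n a b : ℕ), Nat.card (A n (a, b)) = if b ≤ a then S n (a - b) else 0 := by
  intro n
  induction n with
  | zero =>
    intro a b
    rcases le_or_gt b a with h | h
    · rw [if_pos h, S_zero']
      rw [Nat.card_congr (A_zero_equiv (a, b) h)]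
      simp
    · rw [if_neg (by omega)]
      have := A_isEmpty (n := 0) h
      exact Nat.card_of_isEmpty
  | succ n ih =>
    intro a b
    rcases le_or_gt b a with h | h
    · rw [if_pos h]
      have hcard : Nat.card (A (n+1) (a, b))
          = Nat.card (A n (a+1, b)) + Nat.card (A n (a, b+1)) := by
        rw [Nat.card_congr (A_equiv n a b h)]
        have := A_finite n (a+1, b)
        have := A_finite n (a, b+1)
        exact Nat.card_sum
      rw [hcard, ih (a+1) b, ih a (b+1)]
      rcases eq_or_lt_of_le h with rfl | hlt
      · rw [if_pos (by omega), if_neg (by omega)]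
        have h1 : b + 1 - b = 1 := by omega
        have h2 : b - b = 0 := by omega
        rw [h1, h2, S_id1, Nat.add_zero]
      · rw [if_pos (by omega), if_pos (by omega)]
        obtain ⟨k, hk⟩ : ∃ k, a - b = k + 1 := ⟨a - b - 1, by omega⟩
        have h1 : a + 1 - b = k + 2 := by omega
        have h2 : a - (b + 1) = k := by omega
        rw [h1, h2, hk, S_id2]
    · rw [if_neg (by omega)]
      have := A_isEmpty (n := n + 1) h
      exact Nat.card_of_isEmpty

/-- The number of northeastern lattice paths of length `n` starting at `(0,0)` that stay
weakly below the diagonal `y = x` equals `n.choose (n / 2)`. -/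
theorem numPaths_length_below_diagonal (n : ℕ) :
    Nat.card {p : Fin (n + 1) → ℕ × ℕ //
      p 0 = (0, 0) ∧
      (∀ i : Fin n, p i.succ = p i.castSucc + (1, 0) ∨ p i.succ = p i.castSucc + (0, 1)) ∧
      (∀ j, (p j).2 ≤ (p j).1)} = n.choose (n / 2) := by
  have h := card_A n 0 0
  rw [if_pos le_rfl] at h
  have hS : S n 0 = n.choose (n / 2) := by
    simp [S]
  rw [hS] at h
  exact h
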